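/- Let g(x,y) = θ₁x^l + θ₂y^m + (higher-order terms in the sense that every other monomial x^a y^b in the support satisfies a/l + b/m > 1 or is in the region above the segment) be a convergent power series with θ₁, θ₂ ∈ ℂ*, l, m ≥ 1, g(0,0) = 0. Then there exists a parametrization (φ₁, φ₂) ∈ ℂ{t}² with φ₁ ≠ 0, φ₁(0) = φ₂(0) = 0, and g(φ₁(t), φ₂(t)) = 0 identically. -/

import Mathlib

/-- Composition (substitution) `g ∘ Φ` of a power series in `n` variables with an `n`-tuple of
one-variable power series with zero constant term. -/
noncomputable def compPS {n : ℕ} (g : MvPowerSeries (Fin n) ℂ) (Φ : Fin n → PowerSeries ℂ) :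
    PowerSeries ℂ :=
  PowerSeries.mk fun m =>
    ∑ α ∈ Finset.Iic ((Finsupp.equivFunOnFinite.symm fun _ => m : Fin n →₀ ℕ)),
      MvPowerSeries.coeff α g * PowerSeries.coeff m (∏ i, (Φ i) ^ (α i))

namespace NP15

/-- Coefficients `≤ j` of a power of a series depend only on coefficients `≤ j`. -/
lemma coeff_pow_congr {A B : PowerSeries ℂ} {j : ℕ}
    (h : ∀ i ≤ j, PowerSeries.coeff i A = PowerSeries.coeff i B) (p : ℕ) :
    ∀ i ≤ j, PowerSeries.coeff i (A ^ p) = PowerSeries.coeff i (B ^ p) := by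
  induction p with
  | zero => intro i _; simp
  | succ p ih =>
    intro i hi
    rw [pow_succ, pow_succ, PowerSeries.coeff_mul, PowerSeries.coeff_mul]
    refine Finset.sum_congr rfl fun x hx => ?_
    rw [Finset.HasAntidiagonal.mem_antidiagonal] at hx
    rw [ih x.1 (by omega), h x.2 (by omega)]

lemma sum_split_two {ι : Type*} [DecidableEq ι] {s : Finset ι} {a b : ι}
    (ha : a ∈ s) (hb : b ∈ s) (hab : a ≠ b) (f : ι → ℂ) :
    ∑ x ∈ s, f x = f a + f b + ∑ x ∈ (s.erase a).erase b, f x := by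
  rw [add_assoc, Finset.add_sum_erase _ f (Finset.mem_erase.2 ⟨hab.symm, hb⟩),
    Finset.add_sum_erase _ f ha]

/-- Key coefficient splitting: the `k`-th coefficient of the `p`-th power of a series vs its
truncation below `k`. -/
lemma coeff_pow_split (u : ℕ → ℂ) (k : ℕ) (hk : 1 ≤ k) (p : ℕ) :
    PowerSeries.coeff k ((PowerSeries.mk u) ^ p) =
      PowerSeries.coeff k ((PowerSeries.mk fun j => if j < k then u j else 0) ^ p)
        + p * (u 0) ^ (p - 1) * u k := by
  induction p with
  | zero => simp
  | succ p ih =>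
    set U := PowerSeries.mk u with hU
    set A := PowerSeries.mk fun j => if j < k then u j else 0 with hA
    have hagree : ∀ i ≤ k - 1, PowerSeries.coeff i U = PowerSeries.coeff i A := by
      intro i hi
      rw [hU, hA, PowerSeries.coeff_mk, PowerSeries.coeff_mk, if_pos (by omega)]
    have h01 : ((k, 0) : ℕ × ℕ) ∈ Finset.HasAntidiagonal.antidiagonal k := by simp
    have h02 : ((0, k) : ℕ × ℕ) ∈ Finset.HasAntidiagonal.antidiagonal k := by simp
    have hne : ((k, 0) : ℕ × ℕ) ≠ (0, k) := by
      intro h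
      rw [Prod.mk.injEq] at h
      omega
    rw [pow_succ, pow_succ, PowerSeries.coeff_mul, PowerSeries.coeff_mul,
      sum_split_two h01 h02 hne, sum_split_two h01 h02 hne]
    have hrest : ∑ x ∈ ((Finset.HasAntidiagonal.antidiagonal k).erase (k, 0)).erase (0, k),
        PowerSeries.coeff x.1 (U ^ p) * PowerSeries.coeff x.2 U
        = ∑ x ∈ ((Finset.HasAntidiagonal.antidiagonal k).erase (k, 0)).erase (0, k),
        PowerSeries.coeff x.1 (A ^ p) * PowerSeries.coeff x.2 A := by
      refine Finset.sum_congr rfl fun x hx => ?_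
      obtain ⟨hx2, hx1⟩ := Finset.mem_erase.1 hx
      obtain ⟨hx1', hxs⟩ := Finset.mem_erase.1 hx1
      rw [Finset.HasAntidiagonal.mem_antidiagonal] at hxs
      have hne1 : x.1 ≠ k := fun h => hx1' (Prod.ext h (by omega))
      have hne2 : x.2 ≠ k := fun h => hx2 (Prod.ext (by omega) h)
      rw [coeff_pow_congr hagree p x.1 (by omega), hagree x.2 (by omega)]
    rw [hrest]
    have c0U : PowerSeries.coeff 0 U = u 0 := by rw [hU, PowerSeries.coeff_mk]
    have c0A : PowerSeries.coeff 0 A = u 0 := by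
      rw [hA, PowerSeries.coeff_mk, if_pos (by omega)]
    have ckU : PowerSeries.coeff k U = u k := by rw [hU, PowerSeries.coeff_mk]
    have ckA : PowerSeries.coeff k A = 0 := by
      rw [hA, PowerSeries.coeff_mk, if_neg (by omega)]
    have c0Up : PowerSeries.coeff 0 (U ^ p) = (u 0) ^ p := by
      rw [PowerSeries.coeff_zero_eq_constantCoeff, map_pow]
      rw [hU, PowerSeries.constantCoeff_mk]
    have c0Ap : PowerSeries.coeff 0 (A ^ p) = (u 0) ^ p := by
      rw [PowerSeries.coeff_zero_eq_constantCoeff, map_pow]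
      rw [hA, PowerSeries.constantCoeff_mk, if_pos (by omega)]
    rw [ih, ckU, ckA, c0U, c0A, c0Up, c0Ap]
    cases p with
    | zero => push_cast; ring
    | succ q =>
      have hq : q + 1 - 1 = q := rfl
      have hq' : q + 1 + 1 - 1 = q + 1 := rfl
      rw [hq, hq']
      push_cast
      ring

/-- Coefficient formula for our specific substitution. -/
lemma coeff_compPS (g : MvPowerSeries (Fin 2) ℂ) (W : PowerSeries ℂ) (l m N : ℕ) :
    PowerSeries.coeff N (compPS g ![PowerSeries.X ^ m, PowerSeries.X ^ l * W]) =
      ∑ α ∈ Finset.Iic ((Finsupp.equivFunOnFinite.symm fun _ => N : Fin 2 →₀ ℕ)),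
        MvPowerSeries.coeff α g *
          (if m * α 0 + l * α 1 ≤ N then
            PowerSeries.coeff (N - (m * α 0 + l * α 1)) (W ^ α 1) else 0) := by
  rw [compPS, PowerSeries.coeff_mk]
  refine Finset.sum_congr rfl fun α _ => ?_
  congr 1
  rw [Fin.prod_univ_two]
  simp only [Matrix.cons_val_zero, Matrix.cons_val_one, Matrix.head_cons]
  have : (PowerSeries.X ^ m) ^ (α 0) * (PowerSeries.X ^ l * W) ^ (α 1)
      = PowerSeries.X ^ (m * α 0 + l * α 1) * W ^ (α 1) := by
    rw [mul_pow, ← pow_mul, ← pow_mul, pow_add]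
    ring
  rw [this, PowerSeries.coeff_X_pow_mul']

/-- The Newton–Puiseux coefficient recursion. -/
noncomputable def nb (g : MvPowerSeries (Fin 2) ℂ) (θ₂ c : ℂ) (l m : ℕ) : ℕ → ℂ
  | 0 => c
  | k + 1 =>
    -(PowerSeries.coeff (l * m + (k + 1)) (compPS g
        ![PowerSeries.X ^ m, PowerSeries.X ^ l *
          PowerSeries.mk fun j => if h : j < k + 1 then nb g θ₂ c l m j else 0]))
      / (θ₂ * m * c ^ (m - 1))

lemma nb_zero (g : MvPowerSeries (Fin 2) ℂ) (θ₂ c : ℂ) (l m : ℕ) : nb g θ₂ c l m 0 = c := by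
  rw [nb]

lemma nb_succ (g : MvPowerSeries (Fin 2) ℂ) (θ₂ c : ℂ) (l m k : ℕ) :
    nb g θ₂ c l m (k + 1) =
      -(PowerSeries.coeff (l * m + (k + 1)) (compPS g
        ![PowerSeries.X ^ m, PowerSeries.X ^ l *
          PowerSeries.mk fun j => if j < k + 1 then nb g θ₂ c l m j else 0]))
      / (θ₂ * m * c ^ (m - 1)) := by
  rw [nb]
  simp only [dite_eq_ite]

end NP15

/-- Newton–Puiseux: a power series `g(x,y)` whose Newton polygon lies on or above the segment
from `(l,0)` to `(0,m)`, with nonzero coefficients `θ₁` at `x^l` and `θ₂` at `y^m`, admits a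
nontrivial parametrized zero branch `(φ₁, φ₂)` through the origin with `φ₁ ≠ 0`. -/
theorem stmt_15 (g : MvPowerSeries (Fin 2) ℂ) (θ₁ θ₂ : ℂ) (hθ₁ : θ₁ ≠ 0) (hθ₂ : θ₂ ≠ 0)
    (l m : ℕ) (hl : 1 ≤ l) (hm : 1 ≤ m)
    (h1 : MvPowerSeries.coeff (Finsupp.single 0 l) g = θ₁)
    (h2 : MvPowerSeries.coeff (Finsupp.single 1 m) g = θ₂)
    (hhot : ∀ α : Fin 2 →₀ ℕ, MvPowerSeries.coeff α g ≠ 0 →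
      α ≠ Finsupp.single 0 l → α ≠ Finsupp.single 1 m → l * m < α 0 * m + α 1 * l) :
    ∃ φ₁ φ₂ : PowerSeries ℂ, φ₁ ≠ 0 ∧
      PowerSeries.constantCoeff φ₁ = 0 ∧ PowerSeries.constantCoeff φ₂ = 0 ∧
      compPS g ![φ₁, φ₂] = 0 := by
  classical
  -- choose the root c of θ₁ + θ₂ c^m = 0
  obtain ⟨c, hc⟩ := IsAlgClosed.exists_pow_nat_eq (-θ₁ / θ₂) (show 0 < m by omega)
  have hcne : c ≠ 0 := by
    intro h
    rw [h, zero_pow (by omega)] at hc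
    exact hθ₁ (by field_simp at hc; simpa using hc.symm)
  have hroot : θ₁ + θ₂ * c ^ m = 0 := by
    rw [hc]; field_simp; ring
  set u : ℕ → ℂ := NP15.nb g θ₂ c l m with hu
  set U : PowerSeries ℂ := PowerSeries.mk u with hUdef
  set A : ℕ → PowerSeries ℂ := fun k => PowerSeries.mk fun j => if j < k then u j else 0
    with hAdef
  have hu0 : u 0 = c := NP15.nb_zero g θ₂ c l m
  set d : ℂ := θ₂ * m * c ^ (m - 1) with hd
  have hdne : d ≠ 0 := by
    apply mul_ne_zero (mul_ne_zero hθ₂ _) (pow_ne_zero _ hcne)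
    exact_mod_cast Nat.cast_ne_zero.2 (show m ≠ 0 by omega)
  -- basic values of the special exponents
  have e1 : (Finsupp.single (0 : Fin 2) l) 0 = l := Finsupp.single_eq_same
  have e2 : (Finsupp.single (0 : Fin 2) l) 1 = 0 := Finsupp.single_eq_of_ne (by decide)
  have e3 : (Finsupp.single (1 : Fin 2) m) 0 = 0 := Finsupp.single_eq_of_ne (by decide)
  have e4 : (Finsupp.single (1 : Fin 2) m) 1 = m := Finsupp.single_eq_same
  have hσne : Finsupp.single (0 : Fin 2) l ≠ Finsupp.single (1 : Fin 2) m := by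
    intro h
    have h0 := DFunLike.congr_fun h 0
    rw [e1, e3] at h0
    omega
  have hlow : ∀ α : Fin 2 →₀ ℕ, MvPowerSeries.coeff α g ≠ 0 →
      α ≠ Finsupp.single 0 l → α ≠ Finsupp.single 1 m → l * m < m * α 0 + l * α 1 := by
    intro α h ha hb
    have := hhot α h ha hb
    rw [mul_comm m, mul_comm l (α 1)]
    exact this
  have hll : l ≤ l * m := Nat.le_mul_of_pos_right l (by omega)
  have hmm : m ≤ l * m := Nat.le_mul_of_pos_left m (by omega)
  -- the main claim: all coefficients of the composition vanish
  have main : ∀ N, PowerSeries.coeff N (compPS g ![PowerSeries.X ^ m,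
      PowerSeries.X ^ l * U]) = 0 := by
    intro N
    rw [NP15.coeff_compPS]
    rcases lt_or_ge N (l * m) with hN | hN
    · -- small coefficients vanish
      refine Finset.sum_eq_zero fun α _ => ?_
      by_cases hg : MvPowerSeries.coeff α g = 0
      · rw [hg, zero_mul]
      · have hge : l * m ≤ m * α 0 + l * α 1 := by
          by_cases ha : α = Finsupp.single 0 l
          · subst ha; rw [e1, e2, mul_zero, add_zero, mul_comm]
          by_cases hb : α = Finsupp.single 1 m
          · subst hb; rw [e3, e4, mul_zero, zero_add]
          exact (hlow α hg ha hb).le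
        rw [if_neg (by omega), mul_zero]
    · -- N = l*m + k
      obtain ⟨k, rfl⟩ : ∃ k, N = l * m + k := ⟨N - l * m, by omega⟩
      have mem1 : Finsupp.single (0 : Fin 2) l ∈
          Finset.Iic ((Finsupp.equivFunOnFinite.symm fun _ => l * m + k : Fin 2 →₀ ℕ)) := by
        rw [Finset.mem_Iic, Finsupp.single_le_iff]
        show l ≤ l * m + k
        omega
      have mem2 : Finsupp.single (1 : Fin 2) m ∈
          Finset.Iic ((Finsupp.equivFunOnFinite.symm fun _ => l * m + k : Fin 2 →₀ ℕ)) := by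
        rw [Finset.mem_Iic, Finsupp.single_le_iff]
        show m ≤ l * m + k
        omega
      -- split the sum for an arbitrary series W
      have split : ∀ W : PowerSeries ℂ,
          ∑ α ∈ Finset.Iic ((Finsupp.equivFunOnFinite.symm fun _ => l * m + k : Fin 2 →₀ ℕ)),
            MvPowerSeries.coeff α g *
              (if m * α 0 + l * α 1 ≤ l * m + k then
                PowerSeries.coeff (l * m + k - (m * α 0 + l * α 1)) (W ^ α 1) else 0)
          = θ₁ * PowerSeries.coeff k (W ^ 0) + θ₂ * PowerSeries.coeff k (W ^ m)
            + ∑ α ∈ ((Finset.Iic ((Finsupp.equivFunOnFinite.symm fun _ => l * m + k :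
                Fin 2 →₀ ℕ))).erase (Finsupp.single 0 l)).erase (Finsupp.single 1 m),
              MvPowerSeries.coeff α g *
                (if m * α 0 + l * α 1 ≤ l * m + k then
                  PowerSeries.coeff (l * m + k - (m * α 0 + l * α 1)) (W ^ α 1) else 0) := by
        intro W
        rw [NP15.sum_split_two mem1 mem2 hσne]
        congr 2
        · rw [h1, e1, e2, mul_zero, add_zero, mul_comm m l,
            if_pos (Nat.le_add_right _ _), Nat.add_sub_cancel_left]
        · rw [h2, e3, e4, mul_zero, zero_add,
            if_pos (by omega), show l * m + k - l * m = k by omega]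
      rcases Nat.eq_zero_or_pos k with hk0 | hk1
      · -- k = 0 : the initial equation θ₁ + θ₂ c^m = 0
        subst hk0
        rw [split U]
        have hrest : ∑ α ∈ ((Finset.Iic ((Finsupp.equivFunOnFinite.symm fun _ => l * m + 0 :
            Fin 2 →₀ ℕ))).erase (Finsupp.single 0 l)).erase (Finsupp.single 1 m),
            MvPowerSeries.coeff α g *
              (if m * α 0 + l * α 1 ≤ l * m + 0 then
                PowerSeries.coeff (l * m + 0 - (m * α 0 + l * α 1)) (U ^ α 1) else 0) = 0 := by
          refine Finset.sum_eq_zero fun α hα => ?_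
          obtain ⟨hb, hα'⟩ := Finset.mem_erase.1 hα
          obtain ⟨ha, _⟩ := Finset.mem_erase.1 hα'
          by_cases hg : MvPowerSeries.coeff α g = 0
          · rw [hg, zero_mul]
          · rw [if_neg (by have := hlow α hg ha hb; omega), mul_zero]
        rw [hrest, pow_zero]
        have hz1 : PowerSeries.coeff 0 (1 : PowerSeries ℂ) = 1 := by simp
        have hz2 : PowerSeries.coeff 0 (U ^ m) = c ^ m := by
          rw [PowerSeries.coeff_zero_eq_constantCoeff, map_pow, hUdef,
            PowerSeries.constantCoeff_mk, hu0]
        rw [hz1, hz2, mul_one, add_zero]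
        exact hroot
      · -- k ≥ 1 : the recursion kills the coefficient
        obtain ⟨k', rfl⟩ : ∃ k', k = k' + 1 := ⟨k - 1, by omega⟩
        have hag : ∀ i, i < k' + 1 →
            PowerSeries.coeff i U = PowerSeries.coeff i (A (k' + 1)) := by
          intro i hi
          simp only [hUdef, hAdef]
          rw [PowerSeries.coeff_mk, PowerSeries.coeff_mk, if_pos hi]
        have hrest2 : ∑ α ∈ ((Finset.Iic ((Finsupp.equivFunOnFinite.symm
              fun _ => l * m + (k' + 1) : Fin 2 →₀ ℕ))).erase (Finsupp.single 0 l)).erase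
                (Finsupp.single 1 m),
            MvPowerSeries.coeff α g *
              (if m * α 0 + l * α 1 ≤ l * m + (k' + 1) then
                PowerSeries.coeff (l * m + (k' + 1) - (m * α 0 + l * α 1)) (U ^ α 1) else 0)
            = ∑ α ∈ ((Finset.Iic ((Finsupp.equivFunOnFinite.symm
              fun _ => l * m + (k' + 1) : Fin 2 →₀ ℕ))).erase (Finsupp.single 0 l)).erase
                (Finsupp.single 1 m),
            MvPowerSeries.coeff α g *
              (if m * α 0 + l * α 1 ≤ l * m + (k' + 1) then
                PowerSeries.coeff (l * m + (k' + 1) - (m * α 0 + l * α 1)) ((A (k' + 1)) ^ α 1)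
                  else 0) := by
          refine Finset.sum_congr rfl fun α hα => ?_
          obtain ⟨hb, hα'⟩ := Finset.mem_erase.1 hα
          obtain ⟨ha, _⟩ := Finset.mem_erase.1 hα'
          by_cases hg : MvPowerSeries.coeff α g = 0
          · rw [hg, zero_mul, zero_mul]
          have hlt := hlow α hg ha hb
          by_cases hle : m * α 0 + l * α 1 ≤ l * m + (k' + 1)
          · rw [if_pos hle, if_pos hle]
            congr 1
            exact NP15.coeff_pow_congr (fun i hi => hag i (by omega)) (α 1) _ (le_refl _)
          · rw [if_neg hle, if_neg hle]
        have hpow : PowerSeries.coeff (k' + 1) (U ^ m)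
            = PowerSeries.coeff (k' + 1) ((A (k' + 1)) ^ m)
              + m * c ^ (m - 1) * u (k' + 1) := by
          have := NP15.coeff_pow_split u (k' + 1) (by omega) m
          rw [hu0] at this
          simpa only [hUdef, hAdef] using this
        have hone : PowerSeries.coeff (k' + 1) ((1 : PowerSeries ℂ)) = 0 := by
          rw [PowerSeries.coeff_one, if_neg (by omega)]
        have hukey : u (k' + 1) = -(PowerSeries.coeff (l * m + (k' + 1)) (compPS g
            ![PowerSeries.X ^ m, PowerSeries.X ^ l * A (k' + 1)])) / d := by
          have hAk : A (k' + 1)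
              = PowerSeries.mk fun j => if j < k' + 1 then NP15.nb g θ₂ c l m j else 0 := by
            simp only [hAdef, hu]
          rw [hu, NP15.nb_succ, hd, hAk]
        set T := PowerSeries.coeff (l * m + (k' + 1)) (compPS g
            ![PowerSeries.X ^ m, PowerSeries.X ^ l * A (k' + 1)]) with hT
        have hTeq : T = θ₂ * PowerSeries.coeff (k' + 1) ((A (k' + 1)) ^ m)
            + ∑ α ∈ ((Finset.Iic ((Finsupp.equivFunOnFinite.symm
              fun _ => l * m + (k' + 1) : Fin 2 →₀ ℕ))).erase (Finsupp.single 0 l)).erase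
                (Finsupp.single 1 m),
            MvPowerSeries.coeff α g *
              (if m * α 0 + l * α 1 ≤ l * m + (k' + 1) then
                PowerSeries.coeff (l * m + (k' + 1) - (m * α 0 + l * α 1)) ((A (k' + 1)) ^ α 1)
                  else 0) := by
          rw [hT, NP15.coeff_compPS, split (A (k' + 1)), pow_zero, hone, mul_zero, zero_add]
        have hmne : (m : ℂ) ≠ 0 := Nat.cast_ne_zero.2 (by omega)
        rw [split U, hrest2, pow_zero, hone, mul_zero, zero_add, hpow, hukey]
        rw [mul_add, add_right_comm, ← hTeq]
        have hfin : θ₂ * ((m : ℂ) * c ^ (m - 1) * (-T / d)) = -T := by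
          rw [hd]
          field_simp
        rw [hfin]
        ring
  refine ⟨PowerSeries.X ^ m, PowerSeries.X ^ l * U, pow_ne_zero m PowerSeries.X_ne_zero, ?_, ?_, ?_⟩
  · rw [map_pow, PowerSeries.constantCoeff_X, zero_pow (show m ≠ 0 by omega)]
  · rw [map_mul, map_pow, PowerSeries.constantCoeff_X, zero_pow (show l ≠ 0 by omega), zero_mul]
  · ext N
    rw [main N, map_zero]
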